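/- Let α > 0 and ω > 0, and define u(x,t) = 2α√ω (√(α²+ω) + √ω) e^{x√ω + iωt} / ( α²(e^{2x√ω} − 1) + 2√ω (√(α²+ω) + √ω) e^{2x√ω} ). Then for all x ≥ 0 and all t ∈ ℝ, u satisfies the defocusing NLS equation: i ∂_t u(x,t) + ∂_x² u(x,t) − 2|u(x,t)|² u(x,t) = 0. -/

import Mathlib

open MeasureTheory Set

noncomputable section

/-- The explicit function
`u(x,t) = 2α√ω(√(α²+ω)+√ω) e^{x√ω + iωt} / (α²(e^{2x√ω}-1) + 2√ω(√(α²+ω)+√ω)e^{2x√ω})`. -/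
def uExact (α ω : ℝ) : ℝ → ℝ → ℂ := fun x t =>
  ((2 * α * Real.sqrt ω * (Real.sqrt (α ^ 2 + ω) + Real.sqrt ω) : ℝ) : ℂ) *
      Complex.exp ((x * Real.sqrt ω : ℝ) + Complex.I * ω * t) /
    (((α ^ 2 : ℝ) : ℂ) * (Complex.exp ((2 * x * Real.sqrt ω : ℝ) : ℂ) - 1) +
      ((2 * Real.sqrt ω * (Real.sqrt (α ^ 2 + ω) + Real.sqrt ω) : ℝ) : ℂ) *
        Complex.exp ((2 * x * Real.sqrt ω : ℝ) : ℂ))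

/-- For `α > 0`, `ω > 0`, the explicit function `uExact α ω` satisfies the defocusing NLS
equation `i u_t + u_xx - 2|u|²u = 0` for all `x ≥ 0` and all `t ∈ ℝ`. -/
theorem uExact_satisfies_NLS (α ω : ℝ) (hα : 0 < α) (hω : 0 < ω) :
    ∀ x ≥ (0:ℝ), ∀ t : ℝ,
      Complex.I * deriv (fun s => uExact α ω x s) t
        + deriv (fun y => deriv (fun z => uExact α ω z t) y) x
        - 2 * (‖uExact α ω x t‖ : ℂ) ^ 2 * uExact α ω x t = 0 := by
  intro x hx t
  have hr0 : 0 < Real.sqrt ω := Real.sqrt_pos.mpr hω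
  set r : ℝ := Real.sqrt ω with hrdef
  set b : ℝ := Real.sqrt (α ^ 2 + ω) with hbdef
  have hb0 : 0 < b := Real.sqrt_pos.mpr (by positivity)
  have hr2 : r ^ 2 = ω := Real.sq_sqrt hω.le
  have hb2 : b ^ 2 = α ^ 2 + ω := Real.sq_sqrt (by positivity)
  set c : ℝ := 2 * r * (b + r) with hcdef
  have hc0 : 0 < c := by positivity
  have hcc : c ^ 2 = 4 * r ^ 2 * (α ^ 2 + c) := by rw [hcdef]; nlinarith [hr2, hb2]
  set Dr : ℝ → ℝ := fun y => α ^ 2 * (Real.exp (2 * y * r) - 1) + c * Real.exp (2 * y * r)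
    with hDrdef
  set Dp : ℝ → ℝ := fun y =>
      α ^ 2 * (Real.exp (2 * y * r) * (2 * r)) + c * (Real.exp (2 * y * r) * (2 * r)) with hDpdef
  set Dq : ℝ → ℝ := fun y =>
      α ^ 2 * (Real.exp (2 * y * r) * (2 * r) * (2 * r))
        + c * (Real.exp (2 * y * r) * (2 * r) * (2 * r)) with hDqdef
  have hexp : ∀ y : ℝ, HasDerivAt (fun y : ℝ => Real.exp (2 * y * r))
      (Real.exp (2 * y * r) * (2 * r)) y := by
    intro y
    have h1 : HasDerivAt (fun y : ℝ => 2 * y * r) (2 * r) y := by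
      simpa using ((hasDerivAt_id y).const_mul 2).mul_const r
    simpa using h1.exp
  have hDr : ∀ y, HasDerivAt Dr (Dp y) y := fun y =>
    (((hexp y).sub_const 1).const_mul (α ^ 2)).add ((hexp y).const_mul c)
  have hDp : ∀ y, HasDerivAt Dp (Dq y) y := fun y =>
    (((hexp y).mul_const (2 * r)).const_mul (α ^ 2)).add
      (((hexp y).mul_const (2 * r)).const_mul c)
  have hDrx : 0 < Dr x := by
    have h1 : 1 ≤ Real.exp (2 * x * r) := Real.one_le_exp (by positivity)
    have h2 : 0 < Real.exp (2 * x * r) := Real.exp_pos _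
    simp only [hDrdef]
    nlinarith [sq_nonneg α]
  -- rewrite uExact in compact form
  have hu : ∀ y τ : ℝ, uExact α ω y τ =
      ((α * c : ℝ) : ℂ) * Complex.exp (((y * r : ℝ) : ℂ) + Complex.I * (ω : ℝ) * (τ : ℝ)) /
        ((Dr y : ℝ) : ℂ) := by
    intro y τ
    simp only [uExact, hDrdef, hcdef, ← hrdef, ← hbdef]
    rw [← Complex.ofReal_exp]
    push_cast
    ring
  -- derivative of the exponential in x
  have hE : ∀ y : ℝ, HasDerivAt
      (fun z : ℝ => Complex.exp (((z * r : ℝ) : ℂ) + Complex.I * (ω : ℝ) * (t : ℝ)))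
      (Complex.exp (((y * r : ℝ) : ℂ) + Complex.I * (ω : ℝ) * (t : ℝ)) * (r : ℝ)) y := by
    intro y
    have h1 : HasDerivAt (fun z : ℝ => (((z * r : ℝ) : ℂ))) ((r : ℝ) : ℂ) y := by
      simpa using ((hasDerivAt_id y).mul_const r).ofReal_comp
    exact (h1.add_const _).cexp
  -- time derivative
  have ht4 : HasDerivAt
      (fun τ : ℝ => ((α * c : ℝ) : ℂ) *
          Complex.exp (((x * r : ℝ) : ℂ) + Complex.I * (ω : ℝ) * (τ : ℝ)) / ((Dr x : ℝ) : ℂ))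
      (((α * c : ℝ) : ℂ) *
          (Complex.exp (((x * r : ℝ) : ℂ) + Complex.I * (ω : ℝ) * (t : ℝ)) *
            (Complex.I * (ω : ℝ))) / ((Dr x : ℝ) : ℂ)) t := by
    have h1 : HasDerivAt (fun τ : ℝ => ((τ : ℝ) : ℂ)) 1 t := by
      simpa using (hasDerivAt_id t).ofReal_comp
    have h2 : HasDerivAt
        (fun τ : ℝ => (((x * r : ℝ) : ℂ) + Complex.I * (ω : ℝ) * (τ : ℝ)))
        (Complex.I * (ω : ℝ)) t := by
      simpa using (h1.const_mul (Complex.I * (ω : ℝ))).const_add (((x * r : ℝ) : ℂ))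
    exact (h2.cexp.const_mul _).div_const _
  have hdt : deriv (fun s => uExact α ω x s) t =
      ((α * c : ℝ) : ℂ) *
          (Complex.exp (((x * r : ℝ) : ℂ) + Complex.I * (ω : ℝ) * (t : ℝ)) *
            (Complex.I * (ω : ℝ))) / ((Dr x : ℝ) : ℂ) := by
    have hfun : (fun s => uExact α ω x s) =
        fun τ : ℝ => ((α * c : ℝ) : ℂ) *
          Complex.exp (((x * r : ℝ) : ℂ) + Complex.I * (ω : ℝ) * (τ : ℝ)) / ((Dr x : ℝ) : ℂ) :=
      funext fun τ => hu x τ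
    rw [hfun]
    exact ht4.deriv
  have hIdt : Complex.I * deriv (fun s => uExact α ω x s) t =
      -((ω : ℝ) : ℂ) * (((α * c : ℝ) : ℂ) *
          Complex.exp (((x * r : ℝ) : ℂ) + Complex.I * (ω : ℝ) * (t : ℝ)) / ((Dr x : ℝ) : ℂ)) := by
    rw [hdt]
    linear_combination (((α * c : ℝ) : ℂ) *
      Complex.exp (((x * r : ℝ) : ℂ) + Complex.I * (ω : ℝ) * (t : ℝ)) * ((ω : ℝ) : ℂ) /
        ((Dr x : ℝ) : ℂ)) * Complex.I_sq
  -- first x-derivative, valid where Dr ≠ 0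
  have hu1 : ∀ y : ℝ, Dr y ≠ 0 → HasDerivAt (fun z => uExact α ω z t)
      ((((α * c : ℝ) : ℂ) *
            (Complex.exp (((y * r : ℝ) : ℂ) + Complex.I * (ω : ℝ) * (t : ℝ)) * (r : ℝ)) *
            ((Dr y : ℝ) : ℂ) -
          ((α * c : ℝ) : ℂ) *
            Complex.exp (((y * r : ℝ) : ℂ) + Complex.I * (ω : ℝ) * (t : ℝ)) * ((Dp y : ℝ) : ℂ)) /
        ((Dr y : ℝ) : ℂ) ^ 2) y := by
    intro y hy
    have hfun : (fun z => uExact α ω z t) =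
        fun z : ℝ => ((α * c : ℝ) : ℂ) *
          Complex.exp (((z * r : ℝ) : ℂ) + Complex.I * (ω : ℝ) * (t : ℝ)) / ((Dr z : ℝ) : ℂ) :=
      funext fun z => hu z t
    rw [hfun]
    exact ((hE y).const_mul _).div ((hDr y).ofReal_comp) (Complex.ofReal_ne_zero.mpr hy)
  have hev2 : (fun y => deriv (fun z => uExact α ω z t) y) =ᶠ[nhds x]
      (fun y : ℝ =>
        (((α * c : ℝ) : ℂ) *
            (Complex.exp (((y * r : ℝ) : ℂ) + Complex.I * (ω : ℝ) * (t : ℝ)) * (r : ℝ)) *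
            ((Dr y : ℝ) : ℂ) -
          ((α * c : ℝ) : ℂ) *
            Complex.exp (((y * r : ℝ) : ℂ) + Complex.I * (ω : ℝ) * (t : ℝ)) * ((Dp y : ℝ) : ℂ)) /
        ((Dr y : ℝ) : ℂ) ^ 2) := by
    have hcont : ContinuousAt Dr x := (hDr x).continuousAt
    have hne : ∀ᶠ y in nhds x, Dr y ≠ 0 := hcont.eventually_ne hDrx.ne'
    filter_upwards [hne] with y hy
    exact (hu1 y hy).deriv
  -- second x-derivative
  have hnum := ((((hE x).mul_const ((r : ℝ) : ℂ)).const_mul (((α * c : ℝ) : ℂ))).mul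
        ((hDr x).ofReal_comp)).sub
      (((hE x).const_mul (((α * c : ℝ) : ℂ))).mul ((hDp x).ofReal_comp))
  have hden : HasDerivAt (fun y : ℝ => ((Dr y : ℝ) : ℂ) ^ 2)
      (((Dp x : ℝ) : ℂ) * ((Dr x : ℝ) : ℂ) + ((Dr x : ℝ) : ℂ) * ((Dp x : ℝ) : ℂ)) x := by
    simp only [pow_two]
    exact ((hDr x).ofReal_comp).mul ((hDr x).ofReal_comp)
  have hdxx := hnum.div hden (by exact pow_ne_zero 2 (Complex.ofReal_ne_zero.mpr hDrx.ne'))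
  -- norm
  have hnorm : ‖uExact α ω x t‖ = α * c * Real.exp (x * r) / Dr x := by
    rw [hu x t, norm_div, norm_mul, Complex.norm_real, Complex.norm_real,
      Complex.norm_exp, Real.norm_eq_abs, Real.norm_eq_abs]
    rw [show (((x * r : ℝ) : ℂ) + Complex.I * (ω : ℝ) * (t : ℝ)).re = x * r by simp,
      abs_of_pos (by positivity : (0:ℝ) < α * c), abs_of_pos hDrx]
  -- assemble
  rw [hIdt, Filter.EventuallyEq.deriv_eq hev2]
  erw [hdxx.deriv]
  rw [hnorm, hu x t]
  simp only [Pi.mul_apply, Pi.sub_apply]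
  have hsplit : Complex.exp (((x * r : ℝ) : ℂ) + Complex.I * (ω : ℝ) * (t : ℝ)) =
      ((Real.exp (x * r) : ℝ) : ℂ) * Complex.exp (Complex.I * (ω : ℝ) * (t : ℝ)) := by
    rw [Complex.exp_add, Complex.ofReal_exp]
  rw [hsplit]
  simp only [hDrdef, hDpdef, hDqdef]
  have hex2 : Real.exp (2 * x * r) = Real.exp (x * r) ^ 2 := by
    rw [show 2 * x * r = x * r + (x * r) by ring, Real.exp_add, sq]
  rw [hex2]
  have homega : ((ω : ℝ) : ℂ) = ((r : ℝ) : ℂ) ^ 2 := by exact_mod_cast hr2.symm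
  rw [homega]
  set T : ℂ := Complex.exp (Complex.I * ((r : ℝ) : ℂ) ^ 2 * (t : ℝ)) with hT
  set ex : ℝ := Real.exp (x * r) with hexdef
  have hccc : ((c : ℝ) : ℂ) ^ 2 = 4 * ((r : ℝ) : ℂ) ^ 2 * (((α : ℝ) : ℂ) ^ 2 + ((c : ℝ) : ℂ)) := by
    exact_mod_cast hcc
  have hDX : ((α : ℝ) : ℂ) ^ 2 * (((ex : ℝ) : ℂ) ^ 2 - 1) + ((c : ℝ) : ℂ) * ((ex : ℝ) : ℂ) ^ 2 ≠ 0 := by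
    have h1 : ((α : ℝ) : ℂ) ^ 2 * (((ex : ℝ) : ℂ) ^ 2 - 1) + ((c : ℝ) : ℂ) * ((ex : ℝ) : ℂ) ^ 2 =
        ((Dr x : ℝ) : ℂ) := by
      simp only [hDrdef]; rw [hex2]; push_cast; ring
    rw [h1]
    exact Complex.ofReal_ne_zero.mpr hDrx.ne'
  have h0 : T * ((α * c : ℝ) : ℂ) * ((ex : ℝ) : ℂ) *
      (2 * ((ex : ℝ) : ℂ) ^ 2 * ((α : ℝ) : ℂ) ^ 2 *
        (4 * ((r : ℝ) : ℂ) ^ 2 * (((α : ℝ) : ℂ) ^ 2 + ((c : ℝ) : ℂ)) - ((c : ℝ) : ℂ) ^ 2)) /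
      (((α : ℝ) : ℂ) ^ 2 * (((ex : ℝ) : ℂ) ^ 2 - 1) + ((c : ℝ) : ℂ) * ((ex : ℝ) : ℂ) ^ 2) ^ 3
      = (0 : ℂ) := by
    rw [show (4 * ((r : ℝ) : ℂ) ^ 2 * (((α : ℝ) : ℂ) ^ 2 + ((c : ℝ) : ℂ)) - ((c : ℝ) : ℂ) ^ 2)
        = 0 from by rw [hccc]; ring]
    ring
  rw [← h0]
  push_cast
  field_simp
  ring
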